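/- Let d be a positive integer and p a prime with p ∤ d. Then for every integer m with 0 < m ≤ d, p_△(m) = (p−1)·∑_{a=0}^{m−1} a/d + ∑_{a=1}^{m−1} a/d − ∑_{a=1}^{m−1} {pa/d} + #{1 ≤ a < m : d·{pa/d} ≥ m}. -/

import Mathlib

open scoped Classical

/-- `{x}' := {x}` if the fractional part is nonzero, else `1`. -/
noncomputable def fract' (x : ℚ) : ℚ := if Int.fract x = 0 then 1 else Int.fract x

/-- `δ_∈(a) = 1` iff there is `i ≥ 1` with `p·i ≡ a (mod d)` and `i/d < {a/d}`. -/
noncomputable def deltaIn (d p a : ℕ) : ℤ :=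
  if ∃ i : ℕ, 1 ≤ i ∧ p * i ≡ a [MOD d] ∧ (i : ℚ) / d < Int.fract ((a : ℚ) / d) then 1 else 0

/-- `δ_<(a) = 1` iff `{a/d}' < {pa/d}'`. -/
noncomputable def deltaLt (d p a : ℕ) : ℤ :=
  if fract' ((a : ℚ) / d) < fract' (((p : ℚ) * a) / d) then 1 else 0

/-- `ϖ(a) = ⌈(p−1)a/d⌉ − δ_∈(a)`. -/
noncomputable def varpi (d p a : ℕ) : ℤ :=
  ⌈(((p : ℚ) - 1) * a) / d⌉ - deltaIn d p a

/-- The arithmetic polygon of `△ = [0, d]`: `p_△(m) = ∑_{a=0}^{m−1} ϖ(a)`. -/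
noncomputable def pTri (d p m : ℕ) : ℤ := ∑ a ∈ Finset.range m, varpi d p a

/-! ### Auxiliary lemmas -/

lemma aux_fract_self (d : ℕ) (hd : 0 < d) {r : ℕ} (hr : r < d) :
    Int.fract ((r:ℚ)/d) = (r:ℚ)/d := by
  refine Int.fract_eq_self.mpr ⟨by positivity, ?_⟩
  rw [div_lt_one (by exact_mod_cast hd)]
  exact_mod_cast hr

lemma aux_cast_id (d p a : ℕ) :
    (p:ℚ) * a = (d:ℚ) * ((p*a/d : ℕ):ℚ) + ((p*a % d : ℕ):ℚ) := by
  have h := Nat.div_add_mod (p*a) d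
  have h2 : ((d * (p*a/d) + p*a % d : ℕ):ℚ) = ((p*a : ℕ):ℚ) := by exact_mod_cast h
  push_cast at h2
  linarith

lemma aux_fract_pa (d p : ℕ) (hd : 0 < d) (a : ℕ) :
    Int.fract (((p:ℚ) * a) / d) = ((p*a % d : ℕ):ℚ)/d := by
  have hd' : (d:ℚ) ≠ 0 := by positivity
  have h1 : ((p:ℚ) * a) / d = ((p*a % d : ℕ):ℚ)/d + (((p*a/d : ℕ):ℤ):ℚ) := by
    rw [Int.cast_natCast, aux_cast_id d p a]
    field_simp
    ring
  rw [h1, Int.fract_add_intCast, aux_fract_self d hd (Nat.mod_lt _ hd)]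

lemma aux_sig_inj (d p : ℕ) (hcop : Nat.Coprime p d) {a b : ℕ} (ha : a < d) (hb : b < d)
    (h : p * a % d = p * b % d) : a = b := by
  have h2 : a ≡ b [MOD d] := Nat.ModEq.cancel_left_of_coprime hcop.symm h
  unfold Nat.ModEq at h2
  rwa [Nat.mod_eq_of_lt ha, Nat.mod_eq_of_lt hb] at h2

lemma aux_ceil (d p : ℕ) (hd : 0 < d) {a : ℕ} (had : a < d) :
    ⌈(((p : ℚ) - 1) * a) / d⌉ = (p*a/d : ℕ) + (if a < p*a % d then (1:ℤ) else 0) := by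
  have hd' : (0:ℚ) < d := by exact_mod_cast hd
  have hr : p*a % d < d := Nat.mod_lt _ hd
  have hrQ : ((p*a % d : ℕ):ℚ) < d := by exact_mod_cast hr
  have haQ : (a:ℚ) < d := by exact_mod_cast had
  have h1 : (((p : ℚ) - 1) * a) / d = (((p*a % d : ℕ):ℚ) - a)/d + (((p*a/d : ℕ):ℤ):ℚ) := by
    rw [Int.cast_natCast]
    have hc := aux_cast_id d p a
    field_simp
    linear_combination hc
  rw [h1, Int.ceil_add_intCast]
  split_ifs with h
  · have hx1 : (0:ℚ) < (((p*a % d : ℕ):ℚ) - a)/d := by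
      apply div_pos _ hd'
      have : (a:ℚ) < ((p*a % d : ℕ):ℚ) := by exact_mod_cast h
      linarith
    have hx2 : (((p*a % d : ℕ):ℚ) - a)/d ≤ 1 := by
      rw [div_le_one hd']; linarith
    have : ⌈(((p*a % d : ℕ):ℚ) - a)/d⌉ = 1 := by
      rw [Int.ceil_eq_iff] <;> push_cast <;> constructor <;> linarith
    omega
  · have hx1 : (-1:ℚ) < (((p*a % d : ℕ):ℚ) - a)/d := by
      rw [show (-1:ℚ) = -d/d by field_simp, div_lt_div_iff_of_pos_right hd']
      have : (0:ℚ) ≤ ((p*a % d : ℕ):ℚ) := by positivity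
      linarith
    have hx2 : (((p*a % d : ℕ):ℚ) - a)/d ≤ 0 := by
      apply div_nonpos_of_nonpos_of_nonneg _ (le_of_lt hd')
      have : ((p*a % d : ℕ):ℚ) ≤ a := by exact_mod_cast not_lt.mp h
      linarith
    have : ⌈(((p*a % d : ℕ):ℚ) - a)/d⌉ = 0 := by
      rw [Int.ceil_eq_zero_iff]
      exact Set.mem_Ioc.mpr ⟨hx1, hx2⟩
    omega

lemma aux_deltaIn_zero (d p : ℕ) : deltaIn d p 0 = 0 := by
  rw [deltaIn, if_neg]
  rintro ⟨i, hi1, _, hlt⟩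
  rw [Nat.cast_zero, zero_div, Int.fract_zero] at hlt
  have : (0:ℚ) ≤ (i:ℚ)/d := by positivity
  linarith

lemma aux_deltaIn (d p : ℕ) (hd : 0 < d) {a : ℕ} (had : a < d) :
    deltaIn d p a = if (∃ i, 1 ≤ i ∧ i < a ∧ p * i % d = a) then (1:ℤ) else 0 := by
  rw [deltaIn]
  congr 1
  rw [eq_iff_iff]
  constructor
  · rintro ⟨i, hi1, hmod, hlt⟩
    refine ⟨i, hi1, ?_, ?_⟩
    · rw [aux_fract_self d hd had] at hlt
      have : (i:ℚ) < a := by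
        rwa [div_lt_div_iff_of_pos_right (by exact_mod_cast hd : (0:ℚ) < d)] at hlt
      exact_mod_cast this
    · have := hmod
      unfold Nat.ModEq at this
      rwa [Nat.mod_eq_of_lt had] at this
  · rintro ⟨i, hi1, hia, hmod⟩
    refine ⟨i, hi1, ?_, ?_⟩
    · unfold Nat.ModEq
      rw [hmod, Nat.mod_eq_of_lt had]
    · rw [aux_fract_self d hd had,
        div_lt_div_iff_of_pos_right (by exact_mod_cast hd : (0:ℚ) < d)]
      exact_mod_cast hia

lemma aux_card (d p m : ℕ) (hcop : Nat.Coprime p d) (hm2 : m ≤ d) :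
    ((Finset.Icc 1 (m-1)).filter (fun a => a < p * a % d)).card =
    ((Finset.Icc 1 (m-1)).filter (fun a => ∃ i, 1 ≤ i ∧ i < a ∧ p * i % d = a)).card +
    ((Finset.Icc 1 (m-1)).filter (fun a => m ≤ p * a % d)).card := by
  set S := Finset.Icc 1 (m-1) with hS
  set A := S.filter (fun a => a < p * a % d) with hA
  set B := S.filter (fun a => ∃ i, 1 ≤ i ∧ i < a ∧ p * i % d = a) with hB
  set C := S.filter (fun a => m ≤ p * a % d) with hC
  have hmemS : ∀ a, a ∈ S ↔ 1 ≤ a ∧ a ≤ m - 1 := by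
    intro a; rw [hS, Finset.mem_Icc]
  have hCA : C ⊆ A := by
    intro a ha
    rw [hC, Finset.mem_filter] at ha
    rw [hA, Finset.mem_filter]
    refine ⟨ha.1, ?_⟩
    have := (hmemS a).mp ha.1
    omega
  have h1 : (A \ C).card + C.card = A.card := Finset.card_sdiff_add_card_eq_card hCA
  have h2 : (A \ C).card = B.card := by
    apply Finset.card_bij (fun a _ => p * a % d)
    · intro a ha
      rw [Finset.mem_sdiff, hA, hC, Finset.mem_filter, Finset.mem_filter] at ha
      obtain ⟨⟨haS, halt⟩, hnc⟩ := ha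
      have hnm : p * a % d < m := by
        by_contra hge
        exact hnc ⟨haS, by omega⟩
      have haS' := (hmemS a).mp haS
      rw [hB, Finset.mem_filter]
      exact ⟨(hmemS _).mpr (by omega), a, haS'.1, halt, rfl⟩
    · intro a ha a' ha' heq
      rw [Finset.mem_sdiff, hA, Finset.mem_filter] at ha ha'
      have h1 := (hmemS a).mp ha.1.1
      have h2 := (hmemS a').mp ha'.1.1
      exact aux_sig_inj d p hcop (by omega) (by omega) heq
    · intro b hb
      rw [hB, Finset.mem_filter] at hb
      obtain ⟨hbS, i, hi1, hib, hσ⟩ := hb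
      have hbS' := (hmemS b).mp hbS
      refine ⟨i, ?_, hσ⟩
      rw [Finset.mem_sdiff, hA, hC, Finset.mem_filter, Finset.mem_filter]
      have hiS : i ∈ S := (hmemS i).mpr (by omega)
      refine ⟨⟨hiS, by omega⟩, ?_⟩
      rintro ⟨-, hmi⟩
      omega
  omega

theorem stmt6 (d p : ℕ) (hd : 0 < d) (hp : p.Prime) (hpd : ¬ p ∣ d)
    (m : ℕ) (hm1 : 0 < m) (hm2 : m ≤ d) :
    (pTri d p m : ℚ) =
      ((p : ℚ) - 1) * ∑ a ∈ Finset.range m, (a : ℚ) / d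
      + ∑ a ∈ Finset.Icc 1 (m - 1), (a : ℚ) / d
      - ∑ a ∈ Finset.Icc 1 (m - 1), Int.fract (((p : ℚ) * a) / d)
      + (((Finset.Icc 1 (m - 1)).filter
          (fun a => (m : ℚ) ≤ d * Int.fract (((p : ℚ) * a) / d))).card : ℚ) := by
  have hdQ : (0:ℚ) < d := by exact_mod_cast hd
  have hdQ' : (d:ℚ) ≠ 0 := ne_of_gt hdQ
  have hcop : Nat.Coprime p d := (Nat.Prime.coprime_iff_not_dvd hp).mpr hpd
  have hrange : Finset.range m = insert 0 (Finset.Icc 1 (m-1)) := by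
    ext x; simp only [Finset.mem_range, Finset.mem_insert, Finset.mem_Icc]; omega
  have h0S : (0:ℕ) ∉ Finset.Icc 1 (m-1) := by simp
  have hmem : ∀ a ∈ Finset.Icc 1 (m-1), 1 ≤ a ∧ a < d := by
    intro a ha; rw [Finset.mem_Icc] at ha; omega
  -- rewrite the LHS
  have hL : (pTri d p m : ℚ) =
      ∑ a ∈ Finset.Icc 1 (m-1), (((p*a/d : ℕ):ℚ)
        + (if a < p * a % d then (1:ℚ) else 0)
        - (if (∃ i, 1 ≤ i ∧ i < a ∧ p * i % d = a) then (1:ℚ) else 0)) := by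
    rw [pTri, hrange, Finset.sum_insert h0S]
    have h0 : varpi d p 0 = 0 := by
      rw [varpi, aux_deltaIn_zero]
      norm_num
    rw [h0, zero_add]
    push_cast
    apply Finset.sum_congr rfl
    intro a ha
    obtain ⟨ha1, had⟩ := hmem a ha
    rw [varpi, aux_ceil d p hd had, aux_deltaIn d p hd had]
    split_ifs <;> push_cast <;> norm_cast
  -- rewrite the filter on the RHS (note: the filtered set is a coerced `Finset ℚ`)
  have hcoe_mem : ∀ (s : Finset ℕ) (x : ℚ), x ∈ (s : Finset ℚ) ↔ ∃ a ∈ s, (a:ℚ) = x := by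
    intro s x
    show x ∈ (s >>= fun a => pure ((a:ℚ))) ↔ _
    simp [Finset.bind_def, Finset.mem_sup, Finset.pure_def]
  have hdm : ∀ a : ℕ, (d:ℚ) * Int.fract (((p:ℚ) * (a:ℚ)) / d) = ((p*a % d : ℕ):ℚ) := by
    intro a
    rw [aux_fract_pa d p hd a]
    field_simp
  have hfilter : ((Finset.Icc 1 (m - 1)).filter
        (fun a => (m : ℚ) ≤ d * Int.fract (((p : ℚ) * a) / d))).card
      = ((Finset.Icc 1 (m-1)).filter (fun a => m ≤ p * a % d)).card := by
    symm
    refine Finset.card_bij (fun (a : ℕ) (_ : a ∈ (Finset.Icc 1 (m-1)).filter (fun a => m ≤ p * a % d)) => (a:ℚ)) ?_ ?_ ?_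
    · intro a ha
      rw [Finset.mem_filter] at ha ⊢
      refine ⟨(hcoe_mem _ _).mpr ⟨a, ha.1, rfl⟩, ?_⟩
      rw [hdm a]
      exact_mod_cast ha.2
    · intro a _ b _ h
      exact_mod_cast h
    · intro x hx
      rw [Finset.mem_filter] at hx
      obtain ⟨hxmem, hxpred⟩ := hx
      obtain ⟨a, haS, rfl⟩ := (hcoe_mem _ _).mp hxmem
      refine ⟨a, ?_, rfl⟩
      rw [Finset.mem_filter]
      refine ⟨haS, ?_⟩
      rw [hdm a] at hxpred
      exact_mod_cast hxpred
  -- rewrite the first three summands of the RHS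
  have hR1 : ((p:ℚ)-1) * ∑ a ∈ Finset.range m, (a:ℚ)/d
      + ∑ a ∈ Finset.Icc 1 (m-1), (a:ℚ)/d
      - ∑ a ∈ Finset.Icc 1 (m-1), Int.fract (((p:ℚ)*a)/d)
      = ∑ a ∈ Finset.Icc 1 (m-1), ((p*a/d : ℕ):ℚ) := by
    rw [hrange, Finset.sum_insert h0S]
    simp only [Nat.cast_zero, zero_div, add_zero, zero_add]
    rw [Finset.mul_sum, ← Finset.sum_add_distrib, ← Finset.sum_sub_distrib]
    apply Finset.sum_congr rfl
    intro a _
    rw [aux_fract_pa d p hd a]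
    have hc := aux_cast_id d p a
    field_simp
    linear_combination hc
  rw [hL, hfilter, hR1]
  rw [Finset.sum_sub_distrib, Finset.sum_add_distrib, Finset.sum_boole, Finset.sum_boole]
  have hcard := aux_card d p m hcop hm2
  have hcardQ : (((Finset.Icc 1 (m-1)).filter (fun a => a < p * a % d)).card : ℚ) =
      (((Finset.Icc 1 (m-1)).filter (fun a => ∃ i, 1 ≤ i ∧ i < a ∧ p * i % d = a)).card : ℚ)
      + (((Finset.Icc 1 (m-1)).filter (fun a => m ≤ p * a % d)).card : ℚ) := by
    exact_mod_cast hcard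
  linarith
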